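/- Let P be a Markov kernel on a measurable space E and, for x ∈ E, let ℙ_x denote the law on E^ℕ of the Markov chain (x₀ = x, x₁, x₂, …) with transition kernel P (the Ionescu–Tulcea trajectory measure), with E_x the corresponding expectation. Let g : E → ℝ be bounded measurable with 0 ≤ g ≤ 1 and let ν be a probability measure on E with ∫_E g dν < 1. Suppose there exists x ∈ E such that for every ε > 0 there exist p > 0 and N ∈ ℕ with ℙ_x[ |(1/k)·Σ_{i=0}^{k−1} g(x_i) − ∫_E g dν| ≥ ε ] ≤ e^{−kp} for all k ≥ N. Then limsup_{k→∞} (1/k)·log E_x[ exp(Σ_{i=0}^{k−1} g(x_i)) ] < 1. -/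

import Mathlib

open MeasureTheory ProbabilityTheory Filter Topology

/-- If `traj x` is the Ionescu–Tulcea trajectory law of the Markov chain with kernel `P`
started at `x` (characterized by the recursion
`traj x = ∫ P(x,dy) [law of (x, ω₀, ω₁, …) with ω ~ traj y]`), `0 ≤ g ≤ 1`, `∫ g dν < 1`,
and the empirical means of `g` concentrate exponentially around `∫ g dν` under `ℙ_x`, then
`limsup_k (1/k) log E_x[exp(Σ_{i<k} g(x_i))] < 1`. -/
theorem entropy_rate_lt_one_of_concentration {E : Type*} [MeasurableSpace E]
    (P : Kernel E E) [IsMarkovKernel P]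
    (traj : E → Measure (ℕ → E)) (htraj_prob : ∀ x, IsProbabilityMeasure (traj x))
    (htraj : ∀ x : E, traj x
      = (P x).bind fun y =>
          (traj y).map (fun ω => fun n => Nat.casesOn n x (fun m => ω m)))
    (g : E → ℝ) (hg_meas : Measurable g)
    (hg_nonneg : ∀ y, 0 ≤ g y) (hg_le_one : ∀ y, g y ≤ 1)
    (ν : Measure E) [IsProbabilityMeasure ν] (hν : ∫ y, g y ∂ν < 1)
    (x : E)
    (hconc : ∀ ε : ℝ, 0 < ε → ∃ p : ℝ, 0 < p ∧ ∃ N : ℕ, ∀ k : ℕ, N ≤ k →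
      ((traj x) {ω : ℕ → E |
          ε ≤ |(1 / (k : ℝ)) * (∑ i ∈ Finset.range k, g (ω i)) - ∫ y, g y ∂ν|}).toReal
        ≤ Real.exp (-(k : ℝ) * p)) :
    Filter.limsup
      (fun k : ℕ => (1 / (k : ℝ)) *
        Real.log (∫ ω : ℕ → E, Real.exp (∑ i ∈ Finset.range k, g (ω i)) ∂(traj x)))
      Filter.atTop < 1 := by
  classical
  set μ := traj x with hμ
  haveI : IsProbabilityMeasure μ := htraj_prob x
  set m := ∫ y, g y ∂ν with hm
  have hm0 : 0 ≤ m := integral_nonneg hg_nonneg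
  have hε : (0:ℝ) < (1 - m)/2 := by linarith
  obtain ⟨p, hp, N, hN⟩ := hconc ((1-m)/2) hε
  set c : ℝ := max ((1+m)/2) (1 - p) with hc
  have hc1 : c < 1 := max_lt (by linarith) (by linarith)
  have hc0 : 0 ≤ c := le_trans (by linarith) (le_max_left _ _)
  set f : ℕ → ℝ := fun k => (1 / (k : ℝ)) *
      Real.log (∫ ω : ℕ → E, Real.exp (∑ i ∈ Finset.range k, g (ω i)) ∂μ) with hf
  -- measurability
  have hSmeas : ∀ k : ℕ, Measurable fun ω : ℕ → E => ∑ i ∈ Finset.range k, g (ω i) :=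
    fun k => Finset.measurable_sum _ fun i _ => hg_meas.comp (measurable_pi_apply i)
  have hSle : ∀ (k : ℕ) (ω : ℕ → E), ∑ i ∈ Finset.range k, g (ω i) ≤ k := by
    intro k ω
    calc ∑ i ∈ Finset.range k, g (ω i) ≤ ∑ _i ∈ Finset.range k, (1:ℝ) :=
          Finset.sum_le_sum fun i _ => hg_le_one _
    _ = k := by simp
  have hSnn : ∀ (k : ℕ) (ω : ℕ → E), 0 ≤ ∑ i ∈ Finset.range k, g (ω i) :=
    fun k ω => Finset.sum_nonneg fun i _ => hg_nonneg _
  have hint : ∀ k : ℕ,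
      Integrable (fun ω : ℕ → E => Real.exp (∑ i ∈ Finset.range k, g (ω i))) μ := by
    intro k
    refine (integrable_const (Real.exp k)).mono'
      ((Real.measurable_exp.comp (hSmeas k)).aestronglyMeasurable) ?_
    filter_upwards with ω
    rw [Real.norm_eq_abs, abs_of_pos (Real.exp_pos _)]
    exact Real.exp_le_exp.2 (hSle k ω)
  have hone_le : ∀ k : ℕ,
      (1:ℝ) ≤ ∫ ω, Real.exp (∑ i ∈ Finset.range k, g (ω i)) ∂μ := by
    intro k
    calc (1:ℝ) = ∫ _ω, (1:ℝ) ∂μ := by simp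
    _ ≤ _ := integral_mono (integrable_const 1) (hint k)
        (fun ω => Real.one_le_exp (hSnn k ω))
  have hf_nn : ∀ k, 0 ≤ f k := fun k =>
    mul_nonneg (by positivity) (Real.log_nonneg (hone_le k))
  -- key eventual bound
  have hkey : ∀ k : ℕ, max N 1 ≤ k → f k ≤ Real.log 2 / k + c := by
    intro k hk
    have hk1 : (1:ℕ) ≤ k := le_trans (le_max_right _ _) hk
    have hkN : N ≤ k := le_trans (le_max_left _ _) hk
    have hkpos : (0:ℝ) < k := by exact_mod_cast hk1
    set B : Set (ℕ → E) := {ω : ℕ → E |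
        (1-m)/2 ≤ |(1 / (k : ℝ)) * (∑ i ∈ Finset.range k, g (ω i)) - m|} with hB
    have hBmeas : MeasurableSet B := by
      apply measurableSet_le measurable_const
      exact ((measurable_const.mul (hSmeas k)).sub measurable_const).abs
    -- pointwise bound
    have hpt : ∀ ω : ℕ → E, Real.exp (∑ i ∈ Finset.range k, g (ω i)) ≤
        Real.exp (k * ((1+m)/2)) + Real.exp k * B.indicator (fun _ => (1:ℝ)) ω := by
      intro ω
      by_cases hω : ω ∈ B
      · rw [Set.indicator_of_mem hω]
        have h1 : Real.exp (∑ i ∈ Finset.range k, g (ω i)) ≤ Real.exp k :=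
          Real.exp_le_exp.2 (hSle k ω)
        have : (0:ℝ) ≤ Real.exp (k * ((1+m)/2)) := (Real.exp_pos _).le
        linarith
      · rw [Set.indicator_of_notMem hω, mul_zero, add_zero]
        apply Real.exp_le_exp.2
        have hω' : |(1 / (k : ℝ)) * (∑ i ∈ Finset.range k, g (ω i)) - m| < (1-m)/2 :=
          lt_of_not_ge hω
        have h2 : (1 / (k : ℝ)) * (∑ i ∈ Finset.range k, g (ω i)) - m < (1-m)/2 :=
          lt_of_le_of_lt (le_abs_self _) hω'
        have h3 : (1 / (k : ℝ)) * (∑ i ∈ Finset.range k, g (ω i)) < (1+m)/2 := by linarith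
        calc ∑ i ∈ Finset.range k, g (ω i)
            = (k:ℝ) * ((1 / (k : ℝ)) * (∑ i ∈ Finset.range k, g (ω i))) := by
              field_simp
        _ ≤ (k:ℝ) * ((1+m)/2) := by nlinarith
    -- integrate
    have hintRHS : Integrable (fun ω : ℕ → E => Real.exp (k * ((1+m)/2))
        + Real.exp k * B.indicator (fun _ => (1:ℝ)) ω) μ := by
      apply (integrable_const _).add
      exact ((integrable_indicator_iff hBmeas).2 (integrableOn_const
        (measure_ne_top _ _))).const_mul _
    have hI : ∫ ω, Real.exp (∑ i ∈ Finset.range k, g (ω i)) ∂μ ≤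
        Real.exp (k * ((1+m)/2)) + Real.exp k * (μ B).toReal := by
      have := integral_mono (hint k) hintRHS hpt
      rw [integral_add (integrable_const _) (((integrable_indicator_iff hBmeas).2
          (integrableOn_const (measure_ne_top _ _))).const_mul _),
        integral_const, integral_const_mul, integral_indicator_const _ hBmeas] at this
      simpa [measure_univ, smul_eq_mul, measureReal_def] using this
    have hμB : (μ B).toReal ≤ Real.exp (-(k:ℝ) * p) := hN k hkN
    have hI2 : ∫ ω, Real.exp (∑ i ∈ Finset.range k, g (ω i)) ∂μ ≤ 2 * Real.exp (k * c) := by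
      have e1 : Real.exp (k * ((1+m)/2)) ≤ Real.exp (k * c) :=
        Real.exp_le_exp.2 (by
          apply mul_le_mul_of_nonneg_left (le_max_left _ _) hkpos.le)
      have e2 : Real.exp k * Real.exp (-(k:ℝ) * p) ≤ Real.exp (k * c) := by
        rw [← Real.exp_add]
        apply Real.exp_le_exp.2
        have : (k:ℝ) + -(k:ℝ) * p = k * (1 - p) := by ring
        rw [this]
        exact mul_le_mul_of_nonneg_left (le_max_right _ _) hkpos.le
      have e3 : Real.exp k * (μ B).toReal ≤ Real.exp k * Real.exp (-(k:ℝ) * p) :=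
        mul_le_mul_of_nonneg_left hμB (Real.exp_pos _).le
      linarith
    -- take logs
    have hlog : Real.log (∫ ω, Real.exp (∑ i ∈ Finset.range k, g (ω i)) ∂μ) ≤
        Real.log 2 + k * c := by
      have := Real.log_le_log (by linarith [hone_le k]) hI2
      rwa [Real.log_mul (by norm_num) (Real.exp_ne_zero _), Real.log_exp] at this
    calc f k ≤ (1 / (k:ℝ)) * (Real.log 2 + k * c) := by
          apply mul_le_mul_of_nonneg_left hlog (by positivity)
    _ = Real.log 2 / k + c := by field_simp
  -- conclude
  obtain ⟨c', hcc', hc'1⟩ : ∃ c', c < c' ∧ c' < 1 := ⟨(c+1)/2, by linarith, by linarith⟩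
  have htail : ∀ᶠ k : ℕ in atTop, f k ≤ c' := by
    have h0 : Tendsto (fun k : ℕ => Real.log 2 / k + c) atTop (𝓝 (0 + c)) := by
      apply Tendsto.add _ tendsto_const_nhds
      simpa [div_eq_mul_inv] using
        (tendsto_one_div_atTop_nhds_zero_nat.const_mul (Real.log 2))
    rw [zero_add] at h0
    have h1 : ∀ᶠ k : ℕ in atTop, Real.log 2 / k + c ≤ c' :=
      h0.eventually_le_const hcc'
    filter_upwards [h1, eventually_ge_atTop (max N 1)] with k hk1 hk2
    exact le_trans (hkey k hk2) hk1
  have : limsup f atTop ≤ c' :=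
    limsup_le_of_le (isCoboundedUnder_le_of_le _ hf_nn) htail
  exact lt_of_le_of_lt this hc'1
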